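/- arXiv:2602.00792 — 3 statements merged into one kernel-verified Lean document; each statement's English description precedes it below -/
import Mathlib

section
/- (Scalar Trajectory Locking, simultaneous form.) There is a measurable map u: ℝ^K → [0,1], namely u(ε) = F_Y(max_{j≠k} ε_j − ε_k), such that: u(ε) is uniformly distributed on [0,1] when ε has i.i.d. standard Gaussian coordinates, and for every γ ∈ (0,1), setting r = F_Y^{-1}(γ), α̃ = r/√(1+r²), σ̃ = 1/√(1+r²), and w = α̃·e_k + σ̃·ε, the projection satisfies P(w) = x0 if u(ε) < γ and P(w) = e_K if u(ε) ≥ γ, simultaneously for all γ along the trajectory with ε fixed. -/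
open MeasureTheory ProbabilityTheory

noncomputable section

/-- The maximum of the coordinates of `w` over all indices `j ≠ k`. -/
def maxOther {K : ℕ} (hK : 2 ≤ K) (k : Fin K) (w : Fin K → ℝ) : ℝ :=
  (Finset.univ.erase k).sup'
    (by
      apply Finset.card_pos.mp
      rw [Finset.card_erase_of_mem (Finset.mem_univ k), Finset.card_univ, Fintype.card_fin]
      omega) w

/-- The index of the mask state `[M]` (the last coordinate). -/
def maskIdx {K : ℕ} (hK : 2 ≤ K) : Fin K := ⟨K - 1, by omega⟩

/-- The projection operator `P`: it keeps the clean one-hot vector `x0 = e_k` if the signal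
coordinate strictly dominates all other coordinates, otherwise collapses to the mask
vector `e_K`. -/
def proj {K : ℕ} (hK : 2 ≤ K) (k : Fin K) (w : Fin K → ℝ) : Fin K → ℝ :=
  if maxOther hK k w < w k then Pi.single k 1 else Pi.single (maskIdx hK) 1

/-- The `K`-fold product of standard Gaussian measures: the law of `ε` with i.i.d.
standard Gaussian `N(0,1)` coordinates. -/
def gpi (K : ℕ) : Measure (Fin K → ℝ) :=
  Measure.pi fun _ => gaussianReal 0 1

/-- The scalar `Y(ε) = max_{j ≠ k} ε_j − ε_k`. -/
def Yfun {K : ℕ} (hK : 2 ≤ K) (k : Fin K) (ε : Fin K → ℝ) : ℝ :=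
  maxOther hK k ε - ε k

/-- `F_Y`, the cumulative distribution function of `Y = max_{j ≠ k} ε_j − ε_k` for `ε` with
i.i.d. standard Gaussian coordinates. -/
def FY {K : ℕ} (hK : 2 ≤ K) (k : Fin K) : ℝ → ℝ :=
  fun y => cdf ((gpi K).map (Yfun hK k)) y

namespace Stmt10Aux

instance gaussNoAtoms : NullSingletonClass (gaussianReal 0 1) :=
  ⟨fun x => gaussianReal_absolutelyContinuous 0 one_ne_zero (measure_singleton x)⟩

instance gaussOpenPos : (gaussianReal 0 1).IsOpenPosMeasure := by
  refine ⟨fun U hU hne h0 => ?_⟩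
  have h := gaussianReal_absolutelyContinuous' 0 one_ne_zero h0
  exact absurd h (hU.measure_pos volume hne).ne'

instance gpiProb (K : ℕ) : IsProbabilityMeasure (gpi K) := by
  unfold gpi; infer_instance

instance gpiOpenPos (K : ℕ) : (gpi K).IsOpenPosMeasure := by
  unfold gpi; infer_instance

variable {K : ℕ}

lemma erase_nonempty (hK : 2 ≤ K) (k : Fin K) : (Finset.univ.erase k).Nonempty := by
  apply Finset.card_pos.mp
  rw [Finset.card_erase_of_mem (Finset.mem_univ k), Finset.card_univ, Fintype.card_fin]
  omega

variable (hK : 2 ≤ K) (k : Fin K)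

lemma continuous_maxOther : Continuous (maxOther hK k) := by
  have : maxOther hK k = (Finset.univ.erase k).sup'
      (erase_nonempty hK k) (fun j w => w j) := by
    ext w
    unfold maxOther
    rw [Finset.sup'_apply]
  rw [this]
  exact Continuous.finset_sup' _ (fun i _ => continuous_apply i)

lemma continuous_Yfun : Continuous (Yfun hK k) :=
  (continuous_maxOther hK k).sub (continuous_apply k)

lemma measurable_Yfun : Measurable (Yfun hK k) := (continuous_Yfun hK k).measurable

/-- the hyperplane `{ε | ε j = ε k + y}` is `gpi`-null when `j ≠ k`. -/
lemma pair_null {j : Fin K} (hjk : j ≠ k) (y : ℝ) :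
    gpi K {ε : Fin K → ℝ | ε j = ε k + y} = 0 := by
  obtain ⟨n, rfl⟩ : ∃ n, K = n + 1 := ⟨K - 1, by omega⟩
  obtain ⟨m, hm⟩ := Fin.exists_succAbove_eq hjk.symm
  have hmp := measurePreserving_piFinSuccAbove (fun _ : Fin (n + 1) => gaussianReal 0 1) j
  set e := MeasurableEquiv.piFinSuccAbove (fun _ : Fin (n + 1) => ℝ) j with he
  have hs : MeasurableSet {p : ℝ × (Fin n → ℝ) | p.1 = p.2 m + y} :=
    measurableSet_eq_fun measurable_fst (by fun_prop)
  have hset : {ε : Fin (n + 1) → ℝ | ε j = ε k + y}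
      = e ⁻¹' {p : ℝ × (Fin n → ℝ) | p.1 = p.2 m + y} := by
    ext ε
    simp only [Set.mem_setOf_eq, Set.mem_preimage, he,
      MeasurableEquiv.piFinSuccAbove_apply, Fin.insertNthEquiv, Equiv.coe_fn_symm_mk]
    rw [show (Fin.removeNth j ε) m = ε (j.succAbove m) from rfl, hm]
  rw [show gpi (n + 1) = Measure.pi (fun _ => gaussianReal 0 1) from rfl, hset,
    hmp.measure_preimage hs.nullMeasurableSet]
  rw [Measure.prod_apply hs]
  have key : ∀ x : ℝ, (Measure.pi fun _ : Fin n => gaussianReal 0 1)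
      {a : Fin n → ℝ | x = a m + y} = 0 := by
    intro x
    have hx : {a : Fin n → ℝ | x = a m + y} = {f : Fin n → ℝ | f m = x - y} := by
      ext f
      simp only [Set.mem_setOf_eq]
      constructor <;> intro h <;> linarith
    rw [hx, Measure.pi_hyperplane]
  have hpre : ∀ x : ℝ, (Prod.mk x ⁻¹' {p : ℝ × (Fin n → ℝ) | p.1 = p.2 m + y})
      = {a : Fin n → ℝ | x = a m + y} := fun x => rfl
  simp only [hpre, key, lintegral_zero]

lemma Yfun_level_null (y : ℝ) : gpi K {ε | Yfun hK k ε = y} = 0 := by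
  have hsub : {ε : Fin K → ℝ | Yfun hK k ε = y}
      ⊆ ⋃ j ∈ Finset.univ.erase k, {ε : Fin K → ℝ | ε j = ε k + y} := by
    intro ε hε
    obtain ⟨j, hj, hj2⟩ := Finset.exists_mem_eq_sup' (erase_nonempty hK k) ε
    refine Set.mem_iUnion₂.mpr ⟨j, hj, ?_⟩
    have : maxOther hK k ε - ε k = y := hε
    simp only [Set.mem_setOf_eq]
    rw [← hj2]
    · linarith [show maxOther hK k ε = ε j from hj2]
  refine measure_mono_null hsub ?_
  refine (measure_biUnion_null_iff (Finset.univ.erase k).countable_toSet).mpr ?_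
  intro j hj
  exact pair_null k (Finset.ne_of_mem_erase hj) y

/-- Positivity of the law of `Yfun` on open intervals. -/
lemma Yfun_Ioo_pos {a b : ℝ} (hab : a < b) :
    0 < gpi K (Yfun hK k ⁻¹' Set.Ioo a b) := by
  have hopen : IsOpen (Yfun hK k ⁻¹' Set.Ioo a b) :=
    isOpen_Ioo.preimage (continuous_Yfun hK k)
  refine hopen.measure_pos _ ?_
  classical
  refine ⟨fun i => if i = k then 0 else (a + b) / 2, ?_⟩
  have hmax : maxOther hK k (fun i => if i = k then 0 else (a + b) / 2) = (a + b) / 2 := by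
    unfold maxOther
    have h1 : ∀ j ∈ Finset.univ.erase k,
        (fun i => if i = k then (0:ℝ) else (a + b) / 2) j = (a + b) / 2 := fun j hj => by
      simp [Finset.ne_of_mem_erase hj]
    rw [Finset.sup'_congr (erase_nonempty hK k) rfl h1, Finset.sup'_const]
  have hk0 : (fun i => if i = k then (0:ℝ) else (a + b) / 2) k = 0 := by simp
  simp only [Set.mem_preimage, Set.mem_Ioo, Yfun, hmax, hk0, sub_zero, if_true, eq_self_iff_true]
  constructor <;> linarith

variable (K) in
/-- The law of `Y`. -/
def muY (hK : 2 ≤ K) (k : Fin K) : Measure ℝ := (gpi K).map (Yfun hK k)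

instance muYProb : IsProbabilityMeasure (muY K hK k) :=
  Measure.isProbabilityMeasure_map (measurable_Yfun hK k).aemeasurable

lemma muY_Ioo_pos {a b : ℝ} (hab : a < b) : 0 < muY K hK k (Set.Ioo a b) := by
  rw [muY, Measure.map_apply (measurable_Yfun hK k) measurableSet_Ioo]
  exact Yfun_Ioo_pos hK k hab

lemma muY_singleton (y : ℝ) : muY K hK k {y} = 0 := by
  rw [muY, Measure.map_apply (measurable_Yfun hK k) (measurableSet_singleton y)]
  exact Yfun_level_null hK k y

lemma FY_eq (y : ℝ) : FY hK k y = cdf (muY K hK k) y := rfl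

lemma strictMono_FY : StrictMono (FY hK k) := by
  intro a b hab
  rw [FY_eq, FY_eq, cdf_eq_real, cdf_eq_real, measureReal_def, measureReal_def]
  have hunion : Set.Iic a ∪ Set.Ioc a b = Set.Iic b := Set.Iic_union_Ioc_eq_Iic hab.le
  have hdisj : Disjoint (Set.Iic a) (Set.Ioc a b) := Set.Iic_disjoint_Ioc le_rfl
  have hmeas : muY K hK k (Set.Iic b) = muY K hK k (Set.Iic a) + muY K hK k (Set.Ioc a b) := by
    rw [← hunion, measure_union hdisj measurableSet_Ioc]
  have hpos : 0 < muY K hK k (Set.Ioc a b) :=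
    lt_of_lt_of_le (muY_Ioo_pos hK k hab) (measure_mono Set.Ioo_subset_Ioc_self)
  refine ENNReal.toReal_strict_mono (measure_ne_top _ _) ?_
  rw [hmeas]
  exact ENNReal.lt_add_right (measure_ne_top _ _) hpos.ne'

lemma continuous_FY : Continuous (FY hK k) := by
  rw [continuous_iff_continuousAt]
  intro x
  have hmono : Monotone (FY hK k) := (strictMono_FY hK k).monotone
  rw [show FY hK k = ((cdf (muY K hK k) : StieltjesFunction ℝ) : ℝ → ℝ) from rfl] at hmono ⊢
  rw [hmono.continuousAt_iff_leftLim_eq_rightLim, StieltjesFunction.rightLim_eq]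
  have h1 : (cdf (muY K hK k)).measure {x} = 0 := by
    rw [measure_cdf]; exact muY_singleton hK k x
  rw [StieltjesFunction.measure_singleton] at h1
  have hle : Function.leftLim (⇑(cdf (muY K hK k))) x ≤ cdf (muY K hK k) x :=
    hmono.leftLim_le le_rfl
  have : cdf (muY K hK k) x - Function.leftLim (⇑(cdf (muY K hK k))) x ≤ 0 := by
    by_contra h
    push_neg at h
    exact absurd h1 (by simp [ENNReal.ofReal_eq_zero]; linarith)
  linarith

lemma FY_pos (y : ℝ) : 0 < FY hK k y := by
  have h0 : (0:ℝ) ≤ FY hK k (y - 1) := by rw [FY_eq]; exact cdf_nonneg _ _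
  exact lt_of_le_of_lt h0 (strictMono_FY hK k (by linarith))

lemma FY_lt_one (y : ℝ) : FY hK k y < 1 := by
  have h1 : FY hK k (y + 1) ≤ 1 := by rw [FY_eq]; exact cdf_le_one _ _
  exact lt_of_lt_of_le (strictMono_FY hK k (by linarith)) h1

lemma FY_surj {t : ℝ} (ht : t ∈ Set.Ioo (0:ℝ) 1) : ∃ y, FY hK k y = t := by
  obtain ⟨a, ha⟩ : ∃ a, FY hK k a < t := by
    have := tendsto_cdf_atBot (μ := muY K hK k)
    obtain ⟨a, ha⟩ := ((this.eventually (eventually_lt_nhds ht.1)).exists)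
    exact ⟨a, ha⟩
  obtain ⟨b, hb⟩ : ∃ b, t < FY hK k b := by
    have := tendsto_cdf_atTop (μ := muY K hK k)
    obtain ⟨b, hb⟩ := ((this.eventually (eventually_gt_nhds ht.2)).exists)
    exact ⟨b, hb⟩
  have hab : a ≤ b := by
    by_contra h
    push_neg at h
    exact absurd ((strictMono_FY hK k h).trans ha) (by linarith)
  have := intermediate_value_Icc hab (continuous_FY hK k).continuousOn
  obtain ⟨y, _, hy⟩ := this ⟨ha.le, hb.le⟩
  exact ⟨y, hy⟩

end Stmt10Aux

open Stmt10Aux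

/-- Scalar Trajectory Locking, simultaneous form: There is a measurable map
`u : ℝ^K → [0,1]`, namely `u(ε) = F_Y(max_{j≠k} ε_j − ε_k)`, such that `u` is uniformly
distributed on `[0,1]` under the i.i.d. Gaussian law, and for every `γ ∈ (0,1)`, setting
`r = F_Y⁻¹(γ)`, `α̃ = r/√(1+r²)`, `σ̃ = 1/√(1+r²)`, `w = α̃ • e_k + σ̃ • ε`, we have
`P(w) = x0` if `u(ε) < γ` and `P(w) = e_K` if `u(ε) ≥ γ`, simultaneously for all `γ`
along the trajectory with `ε` fixed. -/
theorem stmt10 (K : ℕ) (hK : 2 ≤ K) (k : Fin K) (hk : k ≠ maskIdx hK) :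
    ∃ u : (Fin K → ℝ) → ℝ,
      Measurable u
      ∧ (∀ ε, u ε ∈ Set.Icc (0 : ℝ) 1)
      ∧ u = (fun ε => FY hK k (maxOther hK k ε - ε k))
      ∧ (gpi K).map u = volume.restrict (Set.Icc (0 : ℝ) 1)
      ∧ ∀ γ ∈ Set.Ioo (0 : ℝ) 1, ∀ r : ℝ, FY hK k r = γ → ∀ ε : Fin K → ℝ,
          (u ε < γ →
            proj hK k ((r / Real.sqrt (1 + r ^ 2)) • (Pi.single k 1 : Fin K → ℝ)
                + (1 / Real.sqrt (1 + r ^ 2)) • ε)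
              = (Pi.single k 1 : Fin K → ℝ))
          ∧ (γ ≤ u ε →
            proj hK k ((r / Real.sqrt (1 + r ^ 2)) • (Pi.single k 1 : Fin K → ℝ)
                + (1 / Real.sqrt (1 + r ^ 2)) • ε)
              = (Pi.single (maskIdx hK) 1 : Fin K → ℝ)) := by
  classical
  refine ⟨fun ε => FY hK k (Yfun hK k ε), ?_, ?_, rfl, ?_, ?_⟩
  · exact (continuous_FY hK k).measurable.comp (measurable_Yfun hK k)
  · exact fun ε => ⟨(FY_pos hK k _).le, (FY_lt_one hK k _).le⟩
  · -- uniform distribution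
    have hmapeq : (gpi K).map (fun ε => FY hK k (Yfun hK k ε))
        = (muY K hK k).map (FY hK k) := by
      rw [muY, Measure.map_map (continuous_FY hK k).measurable (measurable_Yfun hK k)]
      rfl
    rw [hmapeq]
    haveI : IsProbabilityMeasure ((muY K hK k).map (FY hK k)) :=
      Measure.isProbabilityMeasure_map (continuous_FY hK k).measurable.aemeasurable
    haveI : IsFiniteMeasure (volume.restrict (Set.Icc (0:ℝ) 1)) :=
      ⟨by rw [Measure.restrict_apply_univ]; simp [Real.volume_Icc]⟩
    refine Measure.ext_of_Iic _ _ (fun t => ?_)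
    rw [Measure.map_apply (continuous_FY hK k).measurable measurableSet_Iic,
      Measure.restrict_apply measurableSet_Iic]
    rcases le_or_gt t 0 with ht | ht
    · have h1 : FY hK k ⁻¹' Set.Iic t = ∅ := by
        ext y
        simp only [Set.mem_preimage, Set.mem_Iic, Set.mem_empty_iff_false, iff_false, not_le]
        exact lt_of_le_of_lt ht (FY_pos hK k y)
      have h2 : Set.Iic t ∩ Set.Icc (0:ℝ) 1 ⊆ {0} := by
        intro x ⟨hx1, hx2, _⟩
        simp only [Set.mem_singleton_iff]
        linarith [le_trans hx1 ht]
      rw [h1]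
      simp only [measure_empty]
      exact ((measure_mono_null h2 (by simp))).symm
    rcases lt_or_ge t 1 with ht1 | ht1
    · obtain ⟨y₀, hy₀⟩ := FY_surj hK k ⟨ht, ht1⟩
      have h1 : FY hK k ⁻¹' Set.Iic t = Set.Iic y₀ := by
        ext y
        simp only [Set.mem_preimage, Set.mem_Iic, ← hy₀]
        exact ⟨fun h => (strictMono_FY hK k).le_iff_le.mp h,
          fun h => (strictMono_FY hK k).monotone h⟩
      have h2 : Set.Iic t ∩ Set.Icc (0:ℝ) 1 = Set.Icc 0 t := by
        ext x
        simp only [Set.mem_inter_iff, Set.mem_Iic, Set.mem_Icc]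
        constructor
        · rintro ⟨h1, h2, h3⟩; exact ⟨h2, h1⟩
        · rintro ⟨h1, h2⟩; exact ⟨h2, h1, by linarith⟩
      rw [h1, h2, Real.volume_Icc, sub_zero, ← hy₀, FY_eq, ofReal_cdf]
    · have h1 : FY hK k ⁻¹' Set.Iic t = Set.univ := by
        ext y
        simp only [Set.mem_preimage, Set.mem_Iic, Set.mem_univ, iff_true]
        exact le_trans (FY_lt_one hK k y).le ht1
      have h2 : Set.Iic t ∩ Set.Icc (0:ℝ) 1 = Set.Icc 0 1 := by
        apply Set.inter_eq_self_of_subset_right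
        intro x ⟨_, hx⟩
        exact le_trans hx ht1
      rw [h1, h2, Real.volume_Icc, measure_univ]
      norm_num
  · -- trajectory locking
    intro γ hγ r hr ε
    set c := Real.sqrt (1 + r ^ 2) with hc
    have hcpos : 0 < c := Real.sqrt_pos.mpr (by positivity)
    set w := (r / c) • (Pi.single k 1 : Fin K → ℝ) + (1 / c) • ε with hw
    have hwk : w k = (r + ε k) / c := by
      simp only [hw, Pi.add_apply, Pi.smul_apply, Pi.single_eq_same, smul_eq_mul]
      field_simp
    have hwj : ∀ j ∈ Finset.univ.erase k, w j = c⁻¹ * ε j := by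
      intro j hj
      have : (Pi.single k 1 : Fin K → ℝ) j = 0 := by simp [Finset.ne_of_mem_erase hj]
      simp only [hw, Pi.add_apply, Pi.smul_apply, this, smul_eq_mul, mul_zero, zero_add]
      ring
    have hmaxw : maxOther hK k w = c⁻¹ * maxOther hK k ε := by
      unfold maxOther
      rw [Finset.sup'_congr (erase_nonempty hK k) rfl hwj]
      rw [Finset.comp_sup'_eq_sup'_comp (erase_nonempty hK k) (fun x : ℝ => c⁻¹ * x)
        (fun x y => mul_max_of_nonneg x y (by positivity))]
      rfl
    have hkey : (maxOther hK k w < w k) ↔ Yfun hK k ε < r := by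
      rw [hmaxw, hwk]
      rw [div_eq_inv_mul, mul_lt_mul_iff_right₀ (by positivity : (0:ℝ) < c⁻¹)]
      constructor <;> intro h <;> [skip; skip] <;> · unfold Yfun at *; linarith
    constructor
    · intro hu
      have hY : Yfun hK k ε < r := by
        by_contra h
        push_neg at h
        have := (strictMono_FY hK k).monotone h
        rw [hr] at this
        linarith
      unfold proj
      rw [if_pos (hkey.mpr hY)]
    · intro hu
      have hY : ¬ (Yfun hK k ε < r) := by
        intro h
        have := strictMono_FY hK k h
        rw [hr] at this
        linarith
      unfold proj
      rw [if_neg (fun h => hY (hkey.mp h))]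
end
end

section
/- (Static Duality: distributional equivalence with the masked-diffusion forward marginal.) Let ε have i.i.d. standard Gaussian coordinates, let γ ∈ (0,1), let r = F_Y^{-1}(γ), α̃ = r/√(1+r²), σ̃ = 1/√(1+r²), and w = α̃·e_k + σ̃·ε. Then the law of the discrete observation z = P(w) on the two-point set {x0, e_K} is γ·δ_{x0} + (1−γ)·δ_{e_K}; i.e., P(z = x0) = γ and P(z = e_K) = 1 − γ, matching the masked diffusion forward marginal q(z | x0). -/
open MeasureTheory ProbabilityTheory

noncomputable section

lemma erase_ne {K : ℕ} (hK : 2 ≤ K) (k : Fin K) : (Finset.univ.erase k).Nonempty := by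
  apply Finset.card_pos.mp
  rw [Finset.card_erase_of_mem (Finset.mem_univ k), Finset.card_univ, Fintype.card_fin]
  omega

instance (K : ℕ) : IsProbabilityMeasure (gpi K) := by unfold gpi; infer_instance

instance : NullSingletonClass (gaussianReal (0:ℝ) 1) :=
  ⟨fun x => (gaussianReal_absolutelyContinuous 0 one_ne_zero) (measure_singleton x)⟩

lemma measurable_maxOther {K : ℕ} (hK : 2 ≤ K) (k : Fin K) :
    Measurable (maxOther hK k) := by
  have h : maxOther hK k =
      (Finset.univ.erase k).sup' (erase_ne hK k) (fun j (w : Fin K → ℝ) => w j) := by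
    funext w
    rw [Finset.sup'_apply]
    rfl
  rw [h]
  exact Finset.measurable_sup' _ fun n _ => measurable_pi_apply n

lemma measurable_Yfun {K : ℕ} (hK : 2 ≤ K) (k : Fin K) : Measurable (Yfun hK k) :=
  (measurable_maxOther hK k).sub (measurable_pi_apply k)

lemma pair_law {K : ℕ} (j i : Fin K) (hji : j ≠ i) :
    (gpi K).map (fun ε => (ε j, ε i)) = (gaussianReal 0 1).prod (gaussianReal 0 1) := by
  refine (Measure.prod_eq fun s t hs ht => ?_).symm
  rw [Measure.map_apply (by fun_prop) (hs.prod ht)]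
  have hset : (fun ε : Fin K → ℝ => (ε j, ε i)) ⁻¹' (s ×ˢ t)
      = Set.pi Set.univ (fun m => if m = j then s else if m = i then t else Set.univ) := by
    ext ε
    simp only [Set.mem_preimage, Set.mem_prod, Set.mem_pi, Set.mem_univ, true_implies]
    constructor
    · rintro ⟨h1, h2⟩ m
      split_ifs with hmj hmi
      · exact hmj ▸ h1
      · exact hmi ▸ h2
      · trivial
    · intro h
      refine ⟨?_, ?_⟩
      · have := h j; simpa using this
      · have := h i; simp only [if_neg hji.symm, if_pos rfl] at this; exact this
  rw [hset]
  unfold gpi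
  rw [Measure.pi_pi]
  have : ∀ m : Fin K, (gaussianReal 0 1) (if m = j then s else if m = i then t else Set.univ)
      = (if m = j then (gaussianReal 0 1) s else if m = i then (gaussianReal 0 1) t else 1) := by
    intro m; split_ifs <;> simp
  rw [Finset.prod_congr rfl (fun m _ => this m)]
  rw [← Finset.mul_prod_erase _ _ (Finset.mem_univ j), if_pos rfl]
  rw [← Finset.mul_prod_erase _ _ (Finset.mem_erase.mpr ⟨hji.symm, Finset.mem_univ i⟩)]
  rw [if_neg hji.symm, if_pos rfl]
  rw [Finset.prod_eq_one, mul_one]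
  intro m hm
  simp only [Finset.mem_erase] at hm
  rw [if_neg hm.2.1, if_neg hm.1]

lemma shear_null {K : ℕ} (j i : Fin K) (hji : j ≠ i) (c : ℝ) :
    gpi K {ε | ε j = ε i + c} = 0 := by
  have hmeas : MeasurableSet {p : ℝ × ℝ | p.1 = p.2 + c} :=
    measurableSet_eq_fun measurable_fst (measurable_snd.add_const c)
  have hset : {ε : Fin K → ℝ | ε j = ε i + c}
      = (fun ε => (ε j, ε i)) ⁻¹' {p : ℝ × ℝ | p.1 = p.2 + c} := rfl
  rw [hset, ← Measure.map_apply (by fun_prop) hmeas, pair_law j i hji,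
    Measure.prod_apply hmeas]
  have hsl : ∀ x : ℝ, (Prod.mk x ⁻¹' {p : ℝ × ℝ | p.1 = p.2 + c}) = {x - c} := by
    intro x; ext y
    simp only [Set.mem_preimage, Set.mem_setOf_eq, Set.mem_singleton_iff]
    constructor <;> intro h <;> linarith
  simp [hsl]

lemma Ynull {K : ℕ} (hK : 2 ≤ K) (k : Fin K) (r : ℝ) :
    gpi K {ε | Yfun hK k ε = r} = 0 := by
  apply measure_mono_null
    (t := ⋃ j : Fin K, {ε : Fin K → ℝ | j ≠ k ∧ ε j = ε k + r})
  · intro ε hε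
    simp only [Set.mem_setOf_eq, Yfun] at hε
    obtain ⟨j, hj, hjeq⟩ := Finset.exists_mem_eq_sup' (erase_ne hK k) ε
    refine Set.mem_iUnion.mpr ⟨j, ?_⟩
    have : maxOther hK k ε = ε j := hjeq
    exact ⟨Finset.ne_of_mem_erase hj, by linarith⟩
  · refine measure_iUnion_null fun j => ?_
    by_cases hj : j = k
    · simp [hj]
    · exact measure_mono_null (fun ε hε => hε.2) (shear_null j k hj r)

lemma single_ne {K : ℕ} (hK : 2 ≤ K) {k : Fin K} (hk : k ≠ maskIdx hK) :
    (Pi.single k 1 : Fin K → ℝ) ≠ Pi.single (maskIdx hK) 1 := by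
  intro h
  have h2 := congrFun h k
  rw [Pi.single_eq_same, Pi.single_eq_of_ne hk] at h2
  exact one_ne_zero h2

lemma proj_apply {K : ℕ} (hK : 2 ≤ K) (k : Fin K) (r : ℝ) (ε : Fin K → ℝ) :
    proj hK k ((r / Real.sqrt (1 + r ^ 2)) • (Pi.single k 1 : Fin K → ℝ)
        + (1 / Real.sqrt (1 + r ^ 2)) • ε)
      = if Yfun hK k ε < r then (Pi.single k 1 : Fin K → ℝ)
        else Pi.single (maskIdx hK) 1 := by
  set s : ℝ := Real.sqrt (1 + r ^ 2) with hs_def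
  have hs : 0 < s := Real.sqrt_pos.mpr (by positivity)
  set w : Fin K → ℝ := (r / s) • (Pi.single k 1 : Fin K → ℝ) + (1 / s) • ε with hw
  have hwj : ∀ j ∈ Finset.univ.erase k, w j = (1 / s) * ε j := by
    intro j hj
    have hjk : j ≠ k := Finset.ne_of_mem_erase hj
    simp [hw, Pi.single_eq_of_ne hjk, smul_eq_mul]
  have hmax : maxOther hK k w = (1 / s) * maxOther hK k ε := by
    unfold maxOther
    rw [Finset.sup'_congr (erase_ne hK k) rfl hwj]
    exact (Finset.comp_sup'_eq_sup'_comp (erase_ne hK k) (fun x => (1 / s) * x)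
      (fun x y => mul_max_of_nonneg x y (by positivity))).symm
  have hwk : w k = r / s + (1 / s) * ε k := by
    simp [hw, smul_eq_mul]
  have hcond : (maxOther hK k w < w k) ↔ Yfun hK k ε < r := by
    rw [hmax, hwk, show r / s + (1 / s) * ε k = (1 / s) * (r + ε k) by ring,
      mul_lt_mul_iff_right₀ (by positivity : (0:ℝ) < 1 / s)]
    unfold Yfun
    constructor <;> intro h <;> linarith
  unfold proj
  exact if_congr hcond rfl rfl

lemma event_lt {K : ℕ} (hK : 2 ≤ K) (k : Fin K) (γ r : ℝ) (hr : FY hK k r = γ) :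
    gpi K {ε | Yfun hK k ε < r} = ENNReal.ofReal γ := by
  have hpm : IsProbabilityMeasure ((gpi K).map (Yfun hK k)) :=
    Measure.isProbabilityMeasure_map (measurable_Yfun hK k).aemeasurable
  have h1 : (gpi K).map (Yfun hK k) (Set.Iic r) = ENNReal.ofReal γ := by
    rw [← hr]; exact (ofReal_cdf _ r).symm
  rw [Measure.map_apply (measurable_Yfun hK k) measurableSet_Iic] at h1
  have hsplit : Yfun hK k ⁻¹' Set.Iic r
      = {ε | Yfun hK k ε < r} ∪ {ε | Yfun hK k ε = r} := by
    ext ε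
    simp only [Set.mem_preimage, Set.mem_Iic, Set.mem_union, Set.mem_setOf_eq]
    exact le_iff_lt_or_eq
  rw [hsplit] at h1
  have hle : gpi K ({ε | Yfun hK k ε < r} ∪ {ε | Yfun hK k ε = r})
      ≤ gpi K {ε | Yfun hK k ε < r} :=
    (measure_union_le _ _).trans (by rw [Ynull hK k r, add_zero])
  exact le_antisymm
    (h1 ▸ measure_mono Set.subset_union_left)
    (h1 ▸ hle)

/-- Static Duality: With `γ ∈ (0,1)`, `r = F_Y⁻¹(γ)`, `α̃ = r/√(1+r²)`,
`σ̃ = 1/√(1+r²)`, `w = α̃ • e_k + σ̃ • ε`, the law of `z = P(w)` is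
`γ·δ_{x0} + (1−γ)·δ_{e_K}`; i.e. `P(z = x0) = γ` and `P(z = e_K) = 1 − γ`. -/
theorem stmt11 (K : ℕ) (hK : 2 ≤ K) (k : Fin K) (hk : k ≠ maskIdx hK)
    (γ : ℝ) (hγ : γ ∈ Set.Ioo (0 : ℝ) 1) (r : ℝ) (hr : FY hK k r = γ) :
    (gpi K).map (fun ε => proj hK k
        ((r / Real.sqrt (1 + r ^ 2)) • (Pi.single k 1 : Fin K → ℝ)
          + (1 / Real.sqrt (1 + r ^ 2)) • ε))
      = ENNReal.ofReal γ • Measure.dirac (Pi.single k 1 : Fin K → ℝ)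
        + ENNReal.ofReal (1 - γ) • Measure.dirac (Pi.single (maskIdx hK) 1 : Fin K → ℝ)
    ∧ gpi K {ε | proj hK k
        ((r / Real.sqrt (1 + r ^ 2)) • (Pi.single k 1 : Fin K → ℝ)
          + (1 / Real.sqrt (1 + r ^ 2)) • ε) = (Pi.single k 1 : Fin K → ℝ)}
      = ENNReal.ofReal γ
    ∧ gpi K {ε | proj hK k
        ((r / Real.sqrt (1 + r ^ 2)) • (Pi.single k 1 : Fin K → ℝ)
          + (1 / Real.sqrt (1 + r ^ 2)) • ε) = (Pi.single (maskIdx hK) 1 : Fin K → ℝ)}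
      = ENNReal.ofReal (1 - γ) := by
  obtain ⟨hγ0, hγ1⟩ := hγ
  have hab : (Pi.single k 1 : Fin K → ℝ) ≠ Pi.single (maskIdx hK) 1 := single_ne hK hk
  have hA : MeasurableSet {ε : Fin K → ℝ | Yfun hK k ε < r} :=
    measurableSet_lt (measurable_Yfun hK k) measurable_const
  have hμA : gpi K {ε : Fin K → ℝ | Yfun hK k ε < r} = ENNReal.ofReal γ :=
    event_lt hK k γ r hr
  have hμAc : gpi K {ε : Fin K → ℝ | Yfun hK k ε < r}ᶜ = ENNReal.ofReal (1 - γ) := by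
    rw [prob_compl_eq_one_sub hA, hμA, ← ENNReal.ofReal_one,
      ← ENNReal.ofReal_sub _ hγ0.le]
  refine ⟨?_, ?_, ?_⟩
  · have hfeq : (fun ε : Fin K → ℝ => proj hK k
        ((r / Real.sqrt (1 + r ^ 2)) • (Pi.single k 1 : Fin K → ℝ)
          + (1 / Real.sqrt (1 + r ^ 2)) • ε))
        = fun ε => if Yfun hK k ε < r then (Pi.single k 1 : Fin K → ℝ)
          else Pi.single (maskIdx hK) 1 := funext (proj_apply hK k r)
    rw [hfeq]
    have hmf : Measurable (fun ε : Fin K → ℝ =>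
        if Yfun hK k ε < r then (Pi.single k 1 : Fin K → ℝ)
        else Pi.single (maskIdx hK) 1) :=
      Measurable.ite hA measurable_const measurable_const
    ext t ht
    rw [Measure.map_apply hmf ht]
    simp only [Measure.coe_add, Measure.coe_smul, Pi.add_apply, Pi.smul_apply,
      Measure.dirac_apply' _ ht, smul_eq_mul]
    by_cases hat : (Pi.single k 1 : Fin K → ℝ) ∈ t <;>
      by_cases hbt : (Pi.single (maskIdx hK) 1 : Fin K → ℝ) ∈ t
    · have hpre : (fun ε : Fin K → ℝ =>
          if Yfun hK k ε < r then (Pi.single k 1 : Fin K → ℝ)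
          else Pi.single (maskIdx hK) 1) ⁻¹' t = Set.univ := by
        ext ε
        simp only [Set.mem_preimage, Set.mem_univ, iff_true]
        split_ifs <;> assumption
      rw [hpre]
      simp only [Set.indicator_of_mem hat, Set.indicator_of_mem hbt, Pi.one_apply,
        mul_one, measure_univ]
      rw [← ENNReal.ofReal_add hγ0.le (by linarith)]
      norm_num
    · have hpre : (fun ε : Fin K → ℝ =>
          if Yfun hK k ε < r then (Pi.single k 1 : Fin K → ℝ)
          else Pi.single (maskIdx hK) 1) ⁻¹' t = {ε | Yfun hK k ε < r} := by
        ext ε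
        simp only [Set.mem_preimage, Set.mem_setOf_eq]
        split_ifs with h <;> simp [h, hat, hbt]
      rw [hpre, hμA]
      simp [Set.indicator_of_mem hat, Set.indicator_of_notMem hbt]
    · have hpre : (fun ε : Fin K → ℝ =>
          if Yfun hK k ε < r then (Pi.single k 1 : Fin K → ℝ)
          else Pi.single (maskIdx hK) 1) ⁻¹' t = {ε | Yfun hK k ε < r}ᶜ := by
        ext ε
        simp only [Set.mem_preimage, Set.mem_compl_iff, Set.mem_setOf_eq]
        split_ifs with h <;> simp [h, hat, hbt]
      rw [hpre, hμAc]
      simp [Set.indicator_of_notMem hat, Set.indicator_of_mem hbt]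
    · have hpre : (fun ε : Fin K → ℝ =>
          if Yfun hK k ε < r then (Pi.single k 1 : Fin K → ℝ)
          else Pi.single (maskIdx hK) 1) ⁻¹' t = ∅ := by
        ext ε
        simp only [Set.mem_preimage, Set.mem_empty_iff_false, iff_false]
        split_ifs <;> assumption
      rw [hpre]
      simp [Set.indicator_of_notMem hat, Set.indicator_of_notMem hbt]
  · have hseteq : {ε : Fin K → ℝ | proj hK k
        ((r / Real.sqrt (1 + r ^ 2)) • (Pi.single k 1 : Fin K → ℝ)
          + (1 / Real.sqrt (1 + r ^ 2)) • ε) = (Pi.single k 1 : Fin K → ℝ)}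
        = {ε : Fin K → ℝ | Yfun hK k ε < r} := by
      ext ε
      rw [Set.mem_setOf_eq, proj_apply hK k r, Set.mem_setOf_eq]
      split_ifs with h <;> simp [h, hab.symm]
    rw [hseteq, hμA]
  · have hseteq : {ε : Fin K → ℝ | proj hK k
        ((r / Real.sqrt (1 + r ^ 2)) • (Pi.single k 1 : Fin K → ℝ)
          + (1 / Real.sqrt (1 + r ^ 2)) • ε) = (Pi.single (maskIdx hK) 1 : Fin K → ℝ)}
        = {ε : Fin K → ℝ | Yfun hK k ε < r}ᶜ := by
      ext ε
      rw [Set.mem_setOf_eq, proj_apply hK k r, Set.mem_compl_iff, Set.mem_setOf_eq]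
      split_ifs with h <;> simp [h, hab]
    rw [hseteq, hμAc]
end
end

section
/- (Dynamic Duality in distribution.) Let ε have i.i.d. standard Gaussian coordinates, let 0 < γ_t ≤ γ_s < 1, and for each γ ∈ {γ_t, γ_s} set r = F_Y^{-1}(γ), α̃ = r/√(1+r²), σ̃ = 1/√(1+r²), and w(γ) = α̃·e_k + σ̃·ε (same ε for both). Then the joint law of the pair (P(w(γ_t)), P(w(γ_s))) equals the joint law of (Mask(x0, u, γ_t), Mask(x0, u, γ_s)) where u is uniformly distributed on [0,1]; in particular P(both = x0) = γ_t, P(first = e_K, second = x0) = γ_s − γ_t, P(both = e_K) = 1 − γ_s, and P(first = x0, second = e_K) = 0. -/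
open MeasureTheory ProbabilityTheory

noncomputable section

/-- The scalar masking operator: `Mask(x0, u, γ) = e_K` (mask) if `u > γ`, `x0` otherwise. -/
def maskOp {α : Type*} (x0 eM : α) (u γ : ℝ) : α :=
  if γ < u then eM else x0

/-- The calibrated latent state `w = (r/√(1+r²)) • e_k + (1/√(1+r²)) • ε`. -/
def wCal {K : ℕ} (k : Fin K) (r : ℝ) (ε : Fin K → ℝ) : Fin K → ℝ :=
  (r / Real.sqrt (1 + r ^ 2)) • (Pi.single k 1 : Fin K → ℝ)
    + (1 / Real.sqrt (1 + r ^ 2)) • ε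

open Set

instance : NullSingletonClass (gaussianReal 0 1) :=
  ⟨fun x => (gaussianReal_absolutelyContinuous 0 one_ne_zero) (measure_singleton x)⟩

instance inst_s15 (K : ℕ) : IsProbabilityMeasure (gpi K) := by
  unfold gpi; infer_instance

lemma slice_null (K : ℕ) (k j : Fin K) (hj : j ≠ k) (r : ℝ) :
    gpi K {ε | ε j - ε k = r} = 0 := by
  classical
  set p : Fin K → Prop := fun i => i ≠ k with hp
  set e := MeasurableEquiv.piEquivPiSubtypeProd (fun _ : Fin K => ℝ) p with he
  have mp := measurePreserving_piEquivPiSubtypeProd (fun _ : Fin K => gaussianReal 0 1) p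
  set i0 : {i // ¬ p i} := ⟨k, by simp [hp]⟩
  set j0 : {i // p i} := ⟨j, hj⟩
  set T : Set ((∀ _ : Subtype p, ℝ) × (∀ _ : {i // ¬ p i}, ℝ)) :=
    {z | z.2 i0 = z.1 j0 - r} with hT
  have hTm : MeasurableSet T := by
    have : T = (fun z : (∀ _ : Subtype p, ℝ) × (∀ _ : {i // ¬ p i}, ℝ) =>
        z.2 i0 - (z.1 j0 - r)) ⁻¹' {0} := by
      ext z; simp [hT, sub_eq_zero]
    rw [this]
    exact (((measurable_pi_apply i0).comp measurable_snd).sub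
      (((measurable_pi_apply j0).comp measurable_fst).sub measurable_const))
      (measurableSet_singleton 0)
  have hpre : {ε : Fin K → ℝ | ε j - ε k = r} = e ⁻¹' T := by
    ext ε
    simp only [mem_setOf_eq, mem_preimage, hT, he,
      MeasurableEquiv.piEquivPiSubtypeProd_apply]
    constructor
    · intro h; simpa [eq_comm, sub_eq_iff_eq_add] using by linarith
    · intro h; linarith [h]
  rw [hpre, show gpi K = Measure.pi fun _ : Fin K => gaussianReal 0 1 from rfl,
    mp.measure_preimage hTm.nullMeasurableSet]
  rw [Measure.prod_apply hTm]
  have : ∀ x, (Measure.pi fun _ : {i // ¬ p i} => gaussianReal 0 1) (Prod.mk x ⁻¹' T) = 0 := by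
    intro x
    have : Prod.mk x ⁻¹' T = {y : ∀ _ : {i // ¬ p i}, ℝ | y i0 = x j0 - r} := rfl
    rw [this]
    exact Measure.pi_hyperplane _ i0 _
  simp [this]

variable {K : ℕ} (hK : 2 ≤ K) (k : Fin K)

lemma maxOther_measurable : Measurable (maxOther hK k) := by
  have h : maxOther hK k = fun w => (Finset.univ.erase k).sup'
      (by
        apply Finset.card_pos.mp
        rw [Finset.card_erase_of_mem (Finset.mem_univ k), Finset.card_univ, Fintype.card_fin]
        omega) (fun j => w j) := rfl
  rw [h]
  have := Finset.measurable_sup' (s := Finset.univ.erase k)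
    (f := fun (j : Fin K) (w : Fin K → ℝ) => w j)
    (by
      apply Finset.card_pos.mp
      rw [Finset.card_erase_of_mem (Finset.mem_univ k), Finset.card_univ, Fintype.card_fin]
      omega)
    (fun n _ => measurable_pi_apply n)
  convert this using 1
  funext w
  rw [Finset.sup'_apply]

lemma Yfun_measurable : Measurable (Yfun hK k) :=
  (maxOther_measurable hK k).sub (measurable_pi_apply k)

lemma Yfun_null (r : ℝ) : gpi K {ε | Yfun hK k ε = r} = 0 := by
  have hsub : {ε : Fin K → ℝ | Yfun hK k ε = r}
      ⊆ ⋃ j ∈ Finset.univ.erase k, {ε : Fin K → ℝ | ε j - ε k = r} := by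
    intro ε hε
    obtain ⟨j, hj, hjv⟩ := Finset.exists_mem_eq_sup' (f := ε)
      (H := by
        apply Finset.card_pos.mp
        rw [Finset.card_erase_of_mem (Finset.mem_univ k), Finset.card_univ, Fintype.card_fin]
        omega) (s := Finset.univ.erase k)
    refine Set.mem_biUnion hj ?_
    have : maxOther hK k ε = ε j := hjv
    simp only [mem_setOf_eq]
    have := hε
    simp only [mem_setOf_eq, Yfun] at this
    rw [‹maxOther hK k ε = ε j›] at this
    exact this
  refine measure_mono_null hsub ?_
  refine measure_biUnion_null_iff (Finset.countable_toSet _) |>.mpr ?_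
  intro j hj
  exact slice_null K k j (Finset.ne_of_mem_erase hj) r

lemma maxOther_wCal (r : ℝ) (ε : Fin K → ℝ) :
    maxOther hK k (wCal k r ε) = (1 / Real.sqrt (1 + r ^ 2)) * maxOther hK k ε := by
  have hσ : (0:ℝ) < 1 / Real.sqrt (1 + r ^ 2) := by positivity
  unfold maxOther
  have h2 : (1 / Real.sqrt (1 + r ^ 2)) * (Finset.univ.erase k).sup'
      (by
        apply Finset.card_pos.mp
        rw [Finset.card_erase_of_mem (Finset.mem_univ k), Finset.card_univ, Fintype.card_fin]
        omega) ε
      = (Finset.univ.erase k).sup'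
      (by
        apply Finset.card_pos.mp
        rw [Finset.card_erase_of_mem (Finset.mem_univ k), Finset.card_univ, Fintype.card_fin]
        omega) (fun j => (1 / Real.sqrt (1 + r ^ 2)) * ε j) :=
    Finset.comp_sup'_eq_sup'_comp _ (fun x : ℝ => (1 / Real.sqrt (1 + r ^ 2)) * x)
      (fun x y => by exact mul_max_of_nonneg x y hσ.le)
  rw [h2]
  apply Finset.sup'_congr _ rfl
  intro j hj
  have hjk : j ≠ k := Finset.ne_of_mem_erase hj
  simp [wCal, Pi.single_eq_of_ne hjk]

lemma proj_wCal (r : ℝ) (ε : Fin K → ℝ) :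
    proj hK k (wCal k r ε)
      = if Yfun hK k ε < r then (Pi.single k 1 : Fin K → ℝ)
        else Pi.single (maskIdx hK) 1 := by
  have hσ : (0:ℝ) < 1 / Real.sqrt (1 + r ^ 2) := by positivity
  have hk' : wCal k r ε k
      = (1 / Real.sqrt (1 + r ^ 2)) * (r + ε k) := by
    simp [wCal]; ring
  have hcond : (maxOther hK k (wCal k r ε) < wCal k r ε k) ↔ Yfun hK k ε < r := by
    rw [maxOther_wCal, hk', mul_lt_mul_iff_right₀ hσ, Yfun]
    constructor <;> intro h <;> linarith
  unfold proj
  by_cases h : Yfun hK k ε < r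
  · rw [if_pos (hcond.mpr h), if_pos h]
  · rw [if_neg (fun hc => h (hcond.mp hc)), if_neg h]

lemma gpi_Yfun_le (r : ℝ) :
    gpi K {ε | Yfun hK k ε ≤ r} = ENNReal.ofReal (FY hK k r) := by
  have hmap : IsProbabilityMeasure ((gpi K).map (Yfun hK k)) :=
    Measure.isProbabilityMeasure_map (Yfun_measurable hK k).aemeasurable
  have h1 : FY hK k r = (((gpi K).map (Yfun hK k)) (Iic r)).toReal := by
    show cdf _ r = _
    rw [cdf_eq_real]; rfl
  rw [Measure.map_apply (Yfun_measurable hK k) measurableSet_Iic] at h1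
  have : Yfun hK k ⁻¹' Iic r = {ε | Yfun hK k ε ≤ r} := rfl
  rw [this] at h1
  rw [h1, ENNReal.ofReal_toReal (measure_ne_top _ _)]

lemma gpi_Yfun_lt (r : ℝ) :
    gpi K {ε | Yfun hK k ε < r} = ENNReal.ofReal (FY hK k r) := by
  have h : {ε : Fin K → ℝ | Yfun hK k ε < r}
      = {ε | Yfun hK k ε ≤ r} \ {ε | Yfun hK k ε = r} := by
    ext ε; simp only [mem_setOf_eq, mem_diff]; constructor
    · exact fun h => ⟨h.le, h.ne⟩
    · exact fun h => lt_of_le_of_ne h.1 h.2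
  rw [h, measure_diff_null (Yfun_null hK k r), gpi_Yfun_le]

lemma FY_mono : Monotone (FY hK k) := monotone_cdf _

/-- Map of a measure under a function constant on three disjoint pieces covering
the space up to a null set. -/
lemma map_three {α β : Type*} [MeasurableSpace α] [MeasurableSpace β] (μ : Measure α)
    (f : α → β) (hf : Measurable f) (A B C : Set α)
    (hA : MeasurableSet A) (hB : MeasurableSet B) (hC : MeasurableSet C)
    (hAB : Disjoint A B) (hAC : Disjoint A C) (hBC : Disjoint B C)
    (hrest : μ (A ∪ B ∪ C)ᶜ = 0)
    (a b c : β) (ha : ∀ x ∈ A, f x = a) (hb : ∀ x ∈ B, f x = b) (hc : ∀ x ∈ C, f x = c) :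
    μ.map f = μ A • Measure.dirac a + μ B • Measure.dirac b + μ C • Measure.dirac c := by
  classical
  ext s hs
  rw [Measure.map_apply hf hs]
  have hsA : f ⁻¹' s ∩ A = if a ∈ s then A else ∅ := by
    split_ifs with h
    · ext x
      simp only [Set.mem_inter_iff, Set.mem_preimage]
      exact ⟨fun h' => h'.2, fun hx => ⟨by rw [ha x hx]; exact h, hx⟩⟩
    · ext x
      simp only [Set.mem_inter_iff, Set.mem_preimage, Set.mem_empty_iff_false, iff_false,
        not_and]
      intro hfx hx
      exact h (by rw [← ha x hx]; exact hfx)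
  have hsB : f ⁻¹' s ∩ B = if b ∈ s then B else ∅ := by
    split_ifs with h
    · ext x
      simp only [Set.mem_inter_iff, Set.mem_preimage]
      exact ⟨fun h' => h'.2, fun hx => ⟨by rw [hb x hx]; exact h, hx⟩⟩
    · ext x
      simp only [Set.mem_inter_iff, Set.mem_preimage, Set.mem_empty_iff_false, iff_false,
        not_and]
      intro hfx hx
      exact h (by rw [← hb x hx]; exact hfx)
  have hsC : f ⁻¹' s ∩ C = if c ∈ s then C else ∅ := by
    split_ifs with h
    · ext x
      simp only [Set.mem_inter_iff, Set.mem_preimage]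
      exact ⟨fun h' => h'.2, fun hx => ⟨by rw [hc x hx]; exact h, hx⟩⟩
    · ext x
      simp only [Set.mem_inter_iff, Set.mem_preimage, Set.mem_empty_iff_false, iff_false,
        not_and]
      intro hfx hx
      exact h (by rw [← hc x hx]; exact hfx)
  have hmain : μ (f ⁻¹' s) = μ (f ⁻¹' s ∩ A) + μ (f ⁻¹' s ∩ B) + μ (f ⁻¹' s ∩ C) := by
    have h0 : μ (f ⁻¹' s) = μ (f ⁻¹' s ∩ (A ∪ B ∪ C)) := by
      apply le_antisymm
      · calc μ (f ⁻¹' s) ≤ μ ((f ⁻¹' s ∩ (A ∪ B ∪ C)) ∪ (A ∪ B ∪ C)ᶜ) := by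
              apply measure_mono
              intro x hx
              by_cases hx2 : x ∈ A ∪ B ∪ C
              · exact Or.inl ⟨hx, hx2⟩
              · exact Or.inr hx2
          _ ≤ μ (f ⁻¹' s ∩ (A ∪ B ∪ C)) + μ (A ∪ B ∪ C)ᶜ := measure_union_le _ _
          _ = μ (f ⁻¹' s ∩ (A ∪ B ∪ C)) := by rw [hrest, add_zero]
      · exact measure_mono Set.inter_subset_left
    rw [h0, Set.inter_union_distrib_left, Set.inter_union_distrib_left]
    rw [measure_union ?hd1 ?hm1, measure_union ?hd2 ?hm2]
    case hd2 =>
      rw [hsA, hsB]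
      split_ifs <;>
        simp_all [Set.disjoint_empty, Set.empty_disjoint, hAB]
    case hm2 =>
      rw [hsB]; split_ifs <;> simp [hB]
    case hd1 =>
      rw [hsA, hsB, hsC]
      split_ifs <;>
        simp_all [Set.disjoint_empty, Set.empty_disjoint, Set.disjoint_union_left,
          hAC, hBC]
    case hm1 =>
      rw [hsC]; split_ifs <;> simp [hC]
  rw [hmain, hsA, hsB, hsC]
  simp only [Measure.coe_add, Measure.coe_smul, Pi.add_apply, Pi.smul_apply,
    Measure.dirac_apply' _ hs, smul_eq_mul]
  split_ifs <;> simp [Set.indicator_apply, *]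

/-- Dynamic Duality in distribution: For `ε` i.i.d. standard Gaussian,
`0 < γ_t ≤ γ_s < 1`, and `w(γ) = α̃ • e_k + σ̃ • ε` with `r = F_Y⁻¹(γ)`,
`α̃ = r/√(1+r²)`, `σ̃ = 1/√(1+r²)` (same `ε` for both levels), the joint law of
`(P(w(γ_t)), P(w(γ_s)))` equals the joint law of `(Mask(x0,u,γ_t), Mask(x0,u,γ_s))` for
`u` uniform on `[0,1]`; in particular `P(both = x0) = γ_t`,
`P(first = e_K, second = x0) = γ_s − γ_t`, `P(both = e_K) = 1 − γ_s`, and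
`P(first = x0, second = e_K) = 0`. -/
theorem stmt15 (K : ℕ) (hK : 2 ≤ K) (k : Fin K) (hk : k ≠ maskIdx hK)
    (γt γs : ℝ) (h0 : 0 < γt) (hts : γt ≤ γs) (hs1 : γs < 1)
    (rt rs : ℝ) (hrt : FY hK k rt = γt) (hrs : FY hK k rs = γs) :
    (gpi K).map (fun ε => (proj hK k (wCal k rt ε), proj hK k (wCal k rs ε)))
      = (volume.restrict (Set.Icc (0 : ℝ) 1)).map
          (fun u => (maskOp (Pi.single k 1 : Fin K → ℝ)
              (Pi.single (maskIdx hK) 1 : Fin K → ℝ) u γt,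
            maskOp (Pi.single k 1 : Fin K → ℝ)
              (Pi.single (maskIdx hK) 1 : Fin K → ℝ) u γs))
    ∧ gpi K {ε | proj hK k (wCal k rt ε) = (Pi.single k 1 : Fin K → ℝ)
        ∧ proj hK k (wCal k rs ε) = (Pi.single k 1 : Fin K → ℝ)}
      = ENNReal.ofReal γt
    ∧ gpi K {ε | proj hK k (wCal k rt ε) = (Pi.single (maskIdx hK) 1 : Fin K → ℝ)
        ∧ proj hK k (wCal k rs ε) = (Pi.single k 1 : Fin K → ℝ)}
      = ENNReal.ofReal (γs - γt)
    ∧ gpi K {ε | proj hK k (wCal k rt ε) = (Pi.single (maskIdx hK) 1 : Fin K → ℝ)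
        ∧ proj hK k (wCal k rs ε) = (Pi.single (maskIdx hK) 1 : Fin K → ℝ)}
      = ENNReal.ofReal (1 - γs)
    ∧ gpi K {ε | proj hK k (wCal k rt ε) = (Pi.single k 1 : Fin K → ℝ)
        ∧ proj hK k (wCal k rs ε) = (Pi.single (maskIdx hK) 1 : Fin K → ℝ)}
      = 0 := by
  classical
  set x0 : Fin K → ℝ := Pi.single k 1 with hx0def
  set eM : Fin K → ℝ := Pi.single (maskIdx hK) 1 with heMdef
  have hne : x0 ≠ eM := by
    intro h
    have := congrFun h k
    rw [hx0def, heMdef] at this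
    simp only [Pi.single_eq_same, Pi.single_eq_of_ne hk] at this
    exact one_ne_zero this
  set A : Set (Fin K → ℝ) := {ε | Yfun hK k ε < rt} with hAdef
  set B : Set (Fin K → ℝ) := {ε | Yfun hK k ε < rs} with hBdef
  have hAm : MeasurableSet A := measurableSet_lt (Yfun_measurable hK k) measurable_const
  have hBm : MeasurableSet B := measurableSet_lt (Yfun_measurable hK k) measurable_const
  -- measures of cells
  have hAB : gpi K (A ∩ B) = ENNReal.ofReal γt := by
    have hset : A ∩ B = {ε | Yfun hK k ε < min rt rs} := by
      ext ε; simp [hAdef, hBdef, lt_min_iff]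
    have hF : FY hK k (min rt rs) = γt := by
      rcases le_total rt rs with h | h
      · rw [min_eq_left h, hrt]
      · have h1 : FY hK k rs ≤ FY hK k rt := FY_mono hK k h
        rw [hrt, hrs] at h1
        rw [min_eq_right h, hrs]
        linarith
    rw [hset, gpi_Yfun_lt, hF]
  have hBγ : gpi K B = ENNReal.ofReal γs := by
    rw [hBdef, gpi_Yfun_lt, hrs]
  have hAγ : gpi K A = ENNReal.ofReal γt := by
    rw [hAdef, gpi_Yfun_lt, hrt]
  have hAuB : gpi K (A ∪ B) = ENNReal.ofReal γs := by
    have hset : A ∪ B = {ε | Yfun hK k ε < max rt rs} := by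
      ext ε; simp [hAdef, hBdef, lt_max_iff]
    have hF : FY hK k (max rt rs) = γs := by
      rcases le_total rt rs with h | h
      · rw [max_eq_right h, hrs]
      · have h1 : FY hK k rs ≤ FY hK k rt := FY_mono hK k h
        rw [hrt, hrs] at h1
        rw [max_eq_left h, hrt]
        linarith
    rw [hset, gpi_Yfun_lt, hF]
  have hABfin : gpi K (A ∩ B) ≠ ⊤ := measure_ne_top _ _
  have hcB : gpi K (Aᶜ ∩ B) = ENNReal.ofReal (γs - γt) := by
    have hset : Aᶜ ∩ B = B \ (A ∩ B) := by
      ext ε; simp only [Set.mem_inter_iff, Set.mem_compl_iff, Set.mem_diff]; tauto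
    rw [hset, measure_diff Set.inter_subset_right (hAm.inter hBm).nullMeasurableSet hABfin,
      hBγ, hAB, ← ENNReal.ofReal_sub _ h0.le]
  have hcc : gpi K (Aᶜ ∩ Bᶜ) = ENNReal.ofReal (1 - γs) := by
    have hset : Aᶜ ∩ Bᶜ = (A ∪ B)ᶜ := by rw [Set.compl_union]
    rw [hset, measure_compl (hAm.union hBm) (measure_ne_top _ _), hAuB,
      measure_univ, ← ENNReal.ofReal_one,
      ← ENNReal.ofReal_sub _ (le_trans h0.le hts)]
  have hAc : gpi K (A ∩ Bᶜ) = 0 := by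
    have hset : A ∩ Bᶜ = A \ (A ∩ B) := by
      ext ε; simp only [Set.mem_inter_iff, Set.mem_compl_iff, Set.mem_diff]; tauto
    rw [hset, measure_diff Set.inter_subset_left (hAm.inter hBm).nullMeasurableSet hABfin,
      hAγ, hAB, tsub_self]
  -- describing the events via A and B
  have hprojx0 : ∀ r (ε : Fin K → ℝ),
      proj hK k (wCal k r ε) = x0 ↔ Yfun hK k ε < r := by
    intro r ε
    rw [proj_wCal]
    by_cases h : Yfun hK k ε < r
    · simp [h, hx0def]
    · simp [h, hx0def, heMdef]
      exact fun hc => (hne hc.symm).elim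
  have hprojeM : ∀ r (ε : Fin K → ℝ),
      proj hK k (wCal k r ε) = eM ↔ ¬ Yfun hK k ε < r := by
    intro r ε
    rw [proj_wCal]
    by_cases h : Yfun hK k ε < r
    · simp [h, hx0def, heMdef]
      exact hne
    · simp [h, heMdef]
  refine ⟨?_, ?_, ?_, ?_, ?_⟩
  · -- the map equality
    have hfeq : (fun ε => (proj hK k (wCal k rt ε), proj hK k (wCal k rs ε)))
        = fun ε => ((if Yfun hK k ε < rt then x0 else eM),
            (if Yfun hK k ε < rs then x0 else eM)) := by
      funext ε
      rw [proj_wCal, proj_wCal]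
    have hgeq : (fun u => (maskOp x0 eM u γt, maskOp x0 eM u γs))
        = fun u : ℝ => ((if γt < u then eM else x0), (if γs < u then eM else x0)) := rfl
    rw [hfeq]
    have hfm : Measurable (fun ε => ((if Yfun hK k ε < rt then x0 else eM),
        (if Yfun hK k ε < rs then x0 else eM))) := by
      apply Measurable.prod
      · exact Measurable.ite hAm measurable_const measurable_const
      · exact Measurable.ite hBm measurable_const measurable_const
    have hgm : Measurable (fun u : ℝ => ((if γt < u then eM else x0),
        (if γs < u then eM else x0))) := by
      apply Measurable.prod
      · exact Measurable.ite measurableSet_Ioi measurable_const measurable_const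
      · exact Measurable.ite measurableSet_Ioi measurable_const measurable_const
    have hL := map_three (gpi K) _ hfm (A ∩ B) (Aᶜ ∩ B) (Aᶜ ∩ Bᶜ)
      (hAm.inter hBm) (hAm.compl.inter hBm) (hAm.compl.inter hBm.compl)
      (by
        rw [Set.disjoint_left]
        rintro x ⟨hx, _⟩ ⟨hx', _⟩
        exact hx' hx)
      (by
        rw [Set.disjoint_left]
        rintro x ⟨hx, _⟩ ⟨hx', _⟩
        exact hx' hx)
      (by
        rw [Set.disjoint_left]
        rintro x ⟨_, hx⟩ ⟨_, hx'⟩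
        exact hx' hx)
      (by
        have : (A ∩ B ∪ Aᶜ ∩ B ∪ Aᶜ ∩ Bᶜ)ᶜ = A ∩ Bᶜ := by
          ext x
          simp only [Set.mem_compl_iff, Set.mem_union, Set.mem_inter_iff]
          tauto
        rw [this]
        exact hAc)
      (x0, x0) (eM, x0) (eM, eM)
      (by
        rintro x ⟨hx1, hx2⟩
        have h1 : Yfun hK k x < rt := hx1
        have h2 : Yfun hK k x < rs := hx2
        simp only [if_pos h1, if_pos h2])
      (by
        rintro x ⟨hx1, hx2⟩
        have h1 : ¬ Yfun hK k x < rt := hx1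
        have h2 : Yfun hK k x < rs := hx2
        simp only [if_neg h1, if_pos h2])
      (by
        rintro x ⟨hx1, hx2⟩
        have h1 : ¬ Yfun hK k x < rt := hx1
        have h2 : ¬ Yfun hK k x < rs := hx2
        simp only [if_neg h1, if_neg h2])
    have hR := map_three (volume.restrict (Set.Icc (0:ℝ) 1)) _ hgm
      (Iic γt) (Ioc γt γs) (Ioi γs)
      measurableSet_Iic measurableSet_Ioc measurableSet_Ioi
      (by
        rw [Set.disjoint_left]
        rintro x hx ⟨hx', _⟩
        exact absurd hx (not_le.mpr hx'))
      (by
        rw [Set.disjoint_left]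
        rintro x hx hx'
        exact absurd hx (not_le.mpr (lt_of_le_of_lt hts hx')))
      (by
        rw [Set.disjoint_left]
        rintro x ⟨_, hx⟩ hx'
        exact absurd hx (not_le.mpr hx'))
      (by
        have : (Iic γt ∪ Ioc γt γs ∪ Ioi γs : Set ℝ) = univ := by
          rw [Set.Iic_union_Ioc_eq_Iic hts, Set.Iic_union_Ioi]
        rw [this, Set.compl_univ]
        simp)
      (x0, x0) (eM, x0) (eM, eM)
      (by
        intro x hx
        simp only [Set.mem_Iic] at hx
        simp [not_lt.mpr hx, not_lt.mpr (le_trans hx hts)])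
      (by
        rintro x ⟨hx1, hx2⟩
        simp [hx1, not_lt.mpr hx2])
      (by
        intro x hx
        simp only [Set.mem_Ioi] at hx
        simp [hx, lt_of_le_of_lt hts hx])
    rw [hL, hgeq, hR]
    have m1 : (volume.restrict (Set.Icc (0:ℝ) 1)) (Iic γt) = ENNReal.ofReal γt := by
      rw [Measure.restrict_apply measurableSet_Iic]
      have : Iic γt ∩ Icc 0 1 = Icc 0 γt := by
        ext x
        simp only [Set.mem_inter_iff, Set.mem_Iic, Set.mem_Icc]
        constructor
        · rintro ⟨h1, h2, _⟩; exact ⟨h2, h1⟩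
        · rintro ⟨h1, h2⟩
          exact ⟨h2, h1, le_trans h2 (le_trans hts hs1.le)⟩
      rw [this, Real.volume_Icc, sub_zero]
    have m2 : (volume.restrict (Set.Icc (0:ℝ) 1)) (Ioc γt γs) = ENNReal.ofReal (γs - γt) := by
      rw [Measure.restrict_apply measurableSet_Ioc]
      have : Ioc γt γs ∩ Icc 0 1 = Ioc γt γs := by
        apply Set.inter_eq_left.mpr
        intro x hx
        exact ⟨le_trans h0.le hx.1.le, le_trans hx.2 hs1.le⟩
      rw [this, Real.volume_Ioc]
    have m3 : (volume.restrict (Set.Icc (0:ℝ) 1)) (Ioi γs) = ENNReal.ofReal (1 - γs) := by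
      rw [Measure.restrict_apply measurableSet_Ioi]
      have : Ioi γs ∩ Icc 0 1 = Ioc γs 1 := by
        ext x
        simp only [Set.mem_inter_iff, Set.mem_Ioi, Set.mem_Icc, Set.mem_Ioc]
        constructor
        · rintro ⟨h1, _, h3⟩; exact ⟨h1, h3⟩
        · rintro ⟨h1, h2⟩
          exact ⟨h1, le_trans (le_trans h0.le hts) h1.le, h2⟩
      rw [this, Real.volume_Ioc]
    rw [hAB, hcB, hcc, m1, m2, m3]
  · have : {ε | proj hK k (wCal k rt ε) = x0 ∧ proj hK k (wCal k rs ε) = x0} = A ∩ B := by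
      ext ε
      simp only [Set.mem_setOf_eq, Set.mem_inter_iff, hprojx0, hAdef, hBdef, mem_setOf_eq]
    rw [this, hAB]
  · have : {ε | proj hK k (wCal k rt ε) = eM ∧ proj hK k (wCal k rs ε) = x0} = Aᶜ ∩ B := by
      ext ε
      simp only [Set.mem_setOf_eq, Set.mem_inter_iff, Set.mem_compl_iff, hprojx0, hprojeM,
        hAdef, hBdef, mem_setOf_eq]
    rw [this, hcB]
  · have : {ε | proj hK k (wCal k rt ε) = eM ∧ proj hK k (wCal k rs ε) = eM} = Aᶜ ∩ Bᶜ := by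
      ext ε
      simp only [Set.mem_setOf_eq, Set.mem_inter_iff, Set.mem_compl_iff, hprojeM,
        hAdef, hBdef, mem_setOf_eq]
    rw [this, hcc]
  · have : {ε | proj hK k (wCal k rt ε) = x0 ∧ proj hK k (wCal k rs ε) = eM} = A ∩ Bᶜ := by
      ext ε
      simp only [Set.mem_setOf_eq, Set.mem_inter_iff, Set.mem_compl_iff, hprojx0, hprojeM,
        hAdef, hBdef, mem_setOf_eq]
    rw [this, hAc]
end
end
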